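/- Fix n ≥ 2, λ ∈ ℂ with λ ≠ 0, and X₀ ∈ ℂ. Then: (i) there exist a, b, c, d ∈ ℂ with ad − bc = 1, a + b = c + d ≠ 0, n/(c+d)² = λ and bc = X₀, i.e. there is a degree-n bicritical map with invariant X = X₀ having a fixed point of multiplier λ at z = 1; and (ii) for any two such quadruples (a,b,c,d) and (a′,b′,c′,d′) one has a^{n+1} b^{n−1} + c^{n−1} d^{n+1} = a′^{n+1} b′^{n−1} + c′^{n−1} d′^{n+1}. (Corollary 2.2: for λ ≠ 0, each fiber {X = X₀} of moduli space contains one and only one conjugacy class with a fixed point of multiplier λ, so Per₁(λ) is the graph of a function Y = Y(X).) -/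

import Mathlib

private lemma negkey (n : ℕ) (hn : 1 ≤ n) (x y : ℂ) :
    (-x) ^ (n + 1) * (-y) ^ (n - 1) = x ^ (n + 1) * y ^ (n - 1) := by
  have h1 : ((-1 : ℂ)) ^ (n + 1) * (-1) ^ (n - 1) = 1 := by
    rw [← pow_add]
    have h : n + 1 + (n - 1) = 2 * n := by omega
    rw [h, pow_mul]
    norm_num
  calc (-x) ^ (n + 1) * (-y) ^ (n - 1)
      = ((-1 : ℂ)) ^ (n + 1) * (-1) ^ (n - 1) * (x ^ (n + 1) * y ^ (n - 1)) := by
        rw [neg_pow, neg_pow]; ring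
    _ = x ^ (n + 1) * y ^ (n - 1) := by rw [h1, one_mul]

private lemma negkey2 (n : ℕ) (hn : 1 ≤ n) (x y : ℂ) :
    (-x) ^ (n - 1) * (-y) ^ (n + 1) = x ^ (n - 1) * y ^ (n + 1) := by
  calc (-x) ^ (n - 1) * (-y) ^ (n + 1) = (-y) ^ (n + 1) * (-x) ^ (n - 1) := by ring
    _ = y ^ (n + 1) * x ^ (n - 1) := negkey n hn y x
    _ = x ^ (n - 1) * y ^ (n + 1) := by ring

theorem stmt11 (n : ℕ) (hn : 2 ≤ n) (lam X₀ : ℂ) (hlam : lam ≠ 0) :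
    (∃ a b c d : ℂ, a * d - b * c = 1 ∧ a + b = c + d ∧ c + d ≠ 0 ∧
      (n : ℂ) / (c + d) ^ 2 = lam ∧ b * c = X₀) ∧
    (∀ a b c d a' b' c' d' : ℂ,
      a * d - b * c = 1 → a + b = c + d → c + d ≠ 0 →
        (n : ℂ) / (c + d) ^ 2 = lam → b * c = X₀ →
      a' * d' - b' * c' = 1 → a' + b' = c' + d' → c' + d' ≠ 0 →
        (n : ℂ) / (c' + d') ^ 2 = lam → b' * c' = X₀ →
      a ^ (n + 1) * b ^ (n - 1) + c ^ (n - 1) * d ^ (n + 1) =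
        a' ^ (n + 1) * b' ^ (n - 1) + c' ^ (n - 1) * d' ^ (n + 1)) := by
  have hn0 : (n : ℂ) ≠ 0 := Nat.cast_ne_zero.mpr (by omega)
  constructor
  · obtain ⟨s, hs⟩ := IsAlgClosed.exists_pow_nat_eq ((n : ℂ) / lam) two_pos
    have hs0 : s ≠ 0 := by
      intro h
      rw [h] at hs
      simp only [zero_pow, ne_eq, OfNat.ofNat_ne_zero, not_false_eq_true] at hs
      exact hn0 (by field_simp at hs; linear_combination -hs)
    set t : ℂ := (s ^ 2 - 1) / s with ht
    obtain ⟨u, hu⟩ := IsAlgClosed.exists_pow_nat_eq (t ^ 2 - 4 * X₀) two_pos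
    set b : ℂ := (t + u) / 2 with hb
    set c : ℂ := (t - u) / 2 with hc
    have hbc : b * c = X₀ := by
      have h : b * c = (t ^ 2 - u ^ 2) / 4 := by rw [hb, hc]; ring
      rw [h, hu]; ring
    have hsum : b + c = t := by rw [hb, hc]; ring
    refine ⟨s - b, b, c, s - c, ?_, by ring, ?_, ?_, hbc⟩
    · have h : (s - b) * (s - c) - b * c = s ^ 2 - s * (b + c) := by ring
      rw [h, hsum, ht]
      field_simp
      ring
    · intro h
      exact hs0 (by linear_combination h)
    · rw [show c + (s - c) = s by ring, hs]
      field_simp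
  · intro a b c d a' b' c' d' h1 h2 h3 h4 h5 h1' h2' h3' h4' h5'
    have hsq : (c + d) ^ 2 * lam = (n : ℂ) := by
      field_simp at h4; linear_combination -h4
    have hsq' : (c' + d') ^ 2 * lam = (n : ℂ) := by
      field_simp at h4'; linear_combination -h4'
    have hss : (c' + d') ^ 2 = (c + d) ^ 2 :=
      mul_right_cancel₀ hlam (by rw [hsq, hsq'])
    have hcases : (c' + d' - (c + d)) * (c' + d' + (c + d)) = 0 := by
      linear_combination hss
    have hrel : (c + d) * (b + c) = (c + d) ^ 2 - 1 := by
      linear_combination -h1 + d * h2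
    have hrel' : (c' + d') * (b' + c') = (c' + d') ^ 2 - 1 := by
      linear_combination -h1' + d' * h2'
    have ha : a = (c + d) - b := by linear_combination h2
    have ha' : a' = (c' + d') - b' := by linear_combination h2'
    have hprod : b' * c' = b * c := by rw [h5, h5']
    rcases mul_eq_zero.mp hcases with hpos | hneg
    · have hseq : c' + d' = c + d := by linear_combination hpos
      have hsum : b' + c' = b + c :=
        mul_left_cancel₀ h3 (by
          linear_combination hrel' - hrel + (c' + d' + c + d - b' - c') * hpos)
      have hroots : (b' - b) * (b' - c) = 0 := by
        linear_combination b' * hsum - hprod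
      rcases mul_eq_zero.mp hroots with hb | hb
      · have hb' : b' = b := by linear_combination hb
        have hc' : c' = c := by linear_combination hsum - hb
        have hd' : d' = d := by linear_combination hseq - hc'
        have hA : a' = a := by rw [ha', hseq, hb', ha]
        rw [hA, hb', hc', hd']
      · have hb' : b' = c := by linear_combination hb
        have hc' : c' = b := by linear_combination hsum - hb
        have hd' : d' = c + d - b := by linear_combination hseq - hc'
        have hA : a' = d := by rw [ha', hseq, hb']; ring
        rw [hb', hc', hd', hA, ha]
        ring
    · have hseq : c' + d' = -(c + d) := by linear_combination hneg
      have hsum : b' + c' = -(b + c) :=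
        mul_left_cancel₀ h3 (by
          linear_combination -hrel' + hrel + (b' + c' + c + d - c' - d') * hneg)
      have hroots : (b' + b) * (b' + c) = 0 := by
        linear_combination b' * hsum - hprod
      rcases mul_eq_zero.mp hroots with hb | hb
      · have hb' : b' = -b := by linear_combination hb
        have hc' : c' = -c := by linear_combination hsum - hb
        have hd' : d' = -d := by linear_combination hseq - hc'
        have hA : a' = -a := by rw [ha', hseq, hb', ha]; ring
        rw [hb', hc', hd', hA, negkey n (by omega) a b, negkey2 n (by omega) c d]
      · have hb' : b' = -c := by linear_combination hb
        have hc' : c' = -b := by linear_combination hsum - hb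
        have hd' : d' = -a := by rw [ha]; linear_combination hseq - hc'
        have hA : a' = -d := by rw [ha', hseq, hb']; ring
        rw [hb', hc', hd', hA, negkey n (by omega) d c, negkey2 n (by omega) b a]
        ring
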